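/- (Proposition 2) Let L : EuclideanSpace ℝ (Fin d) → ℝ be twice continuously differentiable at θ with ∇L(θ) = 0. Let ξ₁, …, ξ_K ∈ EuclideanSpace ℝ (Fin d) and p₁, …, p_K ≥ 0 with Σ_k p_k = 1, and suppose the coordinates of this finitely supported random vector satisfy Σ_k p_k (ξ_k)_i = 0 for all i and Σ_k p_k (ξ_k)_i (ξ_k)_j = 0 for all i ≠ j; write v_i = Σ_k p_k (ξ_k)_i². Then, as t → 0, Σ_{k=1}^K p_k L(θ ⊙ (𝟏 − t ξ_k)) = L(θ) + (t²/2) Σ_{i=1}^d v_i θ_i² D²L(θ)(e_i, e_i) + o(t²), where e_i is the i-th standard basis vector and 𝟏 is the all-ones vector. -/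

import Mathlib

open Asymptotics
open Filter

theorem peano_second_order {f f' : ℝ → ℝ} {c : ℝ}
    (hf : ∀ᶠ t in nhds (0:ℝ), HasDerivAt f (f' t) t)
    (hf'0 : f' 0 = 0) (hf'' : HasDerivAt f' c 0) :
    (fun t : ℝ => f t - f 0 - t ^ 2 / 2 * c) =o[nhds (0:ℝ)] fun t => t ^ 2 := by
  have hgf : ∀ t : ℝ, t ^ 2 = 0 → f t - f 0 - t ^ 2 / 2 * c = 0 := by
    intro t ht
    have : t = 0 := by nlinarith [sq_nonneg t]
    simp [this]
  rw [isLittleO_iff_tendsto hgf]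
  have key : Tendsto (fun t : ℝ => (f t - f 0 - t ^ 2 / 2 * c) / t ^ 2)
      (nhdsWithin (0:ℝ) {(0:ℝ)}ᶜ) (nhds 0) := by
    apply HasDerivAt.lhopital_zero_nhdsNE (f' := fun t => f' t - t * c) (g' := fun t => 2 * t)
    · filter_upwards [eventually_nhdsWithin_of_eventually_nhds hf] with t ht
      have h1 : HasDerivAt (fun s : ℝ => s ^ 2 / 2 * c) (t * c) t := by
        have := (hasDerivAt_pow 2 t).div_const 2 |>.mul_const c
        exact this.congr_deriv (by push_cast; ring)
      exact (ht.sub_const (f 0)).sub h1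
    · filter_upwards with t
      have := hasDerivAt_pow 2 t
      exact this.congr_deriv (by push_cast; ring)
    · filter_upwards [self_mem_nhdsWithin] with t ht
      simpa using ht
    · have hc : ContinuousAt f 0 := (hf.self_of_nhds).continuousAt
      have : Tendsto (fun t : ℝ => f t - f 0 - t ^ 2 / 2 * c) (nhds 0) (nhds 0) := by
        have := (hc.tendsto.sub_const (f 0)).sub
          ((continuous_pow 2).continuousAt.tendsto.div_const 2 |>.mul_const c)
        simpa using this
      exact this.mono_left nhdsWithin_le_nhds
    · have : Tendsto (fun t : ℝ => t ^ 2) (nhds (0:ℝ)) (nhds 0) := by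
        simpa using (continuous_pow 2).tendsto (0:ℝ)
      exact this.mono_left nhdsWithin_le_nhds
    · have hslope : Tendsto (fun t : ℝ => f' t / t) (nhdsWithin 0 {(0:ℝ)}ᶜ) (nhds c) := by
        have := hasDerivAt_iff_tendsto_slope.mp hf''
        refine this.congr (fun t => ?_)
        simp [slope, hf'0, div_eq_inv_mul]
      have : Tendsto (fun t : ℝ => (f' t / t - c) / 2) (nhdsWithin 0 {(0:ℝ)}ᶜ) (nhds 0) := by
        have := (hslope.sub_const c).div_const 2
        simpa using this
      refine this.congr' ?_
      filter_upwards [self_mem_nhdsWithin] with t ht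
      have ht' : t ≠ 0 := by simpa using ht
      rw [mul_comm (2:ℝ) t, ← div_div, sub_div, mul_comm t c, sub_div (f' t) (c * t) t,
        mul_div_assoc, div_self ht', mul_one, sub_div]
  have h0 : Tendsto (fun t : ℝ => (f t - f 0 - t ^ 2 / 2 * c) / t ^ 2) (pure (0:ℝ)) (nhds 0) := by
    rw [tendsto_pure_left]
    intro s hs
    simpa using mem_of_mem_nhds hs
  exact (nhdsNE_sup_pure (0:ℝ)) ▸ (key.sup h0)


/-- Hadamard (coordinatewise) product on `EuclideanSpace ℝ (Fin d)`. -/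
noncomputable def hadamard {d : ℕ} (m x : EuclideanSpace ℝ (Fin d)) :
    EuclideanSpace ℝ (Fin d) :=
  WithLp.toLp 2 (fun i => m i * x i)

/-- The all-ones vector in `EuclideanSpace ℝ (Fin d)`. -/
noncomputable def allOnes (d : ℕ) : EuclideanSpace ℝ (Fin d) := WithLp.toLp 2 (fun _ => 1)

/-- Proposition 2: if `L` is twice continuously differentiable at a critical point `θ`
(`∇L(θ) = 0`) and the finitely supported random perturbation `ξ` (values `ξ k` with
probabilities `p k`) has centered, pairwise-uncorrelated coordinates with `v i = E[ξ_i²]`,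
then as `t → 0`,
`Σ_k p_k L(θ ⊙ (𝟏 − t ξ_k)) = L(θ) + (t²/2) Σ_i v_i θ_i² D²L(θ)(e_i, e_i) + o(t²)`. -/
theorem smoothed_objective_taylor {d K : ℕ} (L : EuclideanSpace ℝ (Fin d) → ℝ)
    (θ : EuclideanSpace ℝ (Fin d))
    (hL : ContDiffAt ℝ 2 L θ) (hgrad : gradient L θ = 0)
    (ξ : Fin K → EuclideanSpace ℝ (Fin d))
    (p : Fin K → ℝ) (hp : ∀ k, 0 ≤ p k) (hp1 : ∑ k, p k = 1)
    (hmean : ∀ i, ∑ k, p k * ξ k i = 0)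
    (huncorr : ∀ i j, i ≠ j → ∑ k, p k * (ξ k i * ξ k j) = 0)
    (v : Fin d → ℝ) (hv : ∀ i, v i = ∑ k, p k * (ξ k i) ^ 2) :
    (fun t : ℝ =>
        (∑ k, p k * L (hadamard θ (allOnes d - t • ξ k)))
          - L θ
          - t ^ 2 / 2 * ∑ i, v i * θ i ^ 2 *
              fderiv ℝ (fderiv ℝ L) θ (EuclideanSpace.single i 1)
                (EuclideanSpace.single i 1))
      =o[nhds (0 : ℝ)] fun t => t ^ 2 := by
  classical
  have h0 : fderiv ℝ L θ = 0 := by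
    have h := hgrad
    unfold gradient at h
    rwa [LinearIsometryEquiv.map_eq_zero_iff] at h
  set B := fderiv ℝ (fderiv ℝ L) θ with hBdef
  set u : Fin K → EuclideanSpace ℝ (Fin d) := fun k => hadamard θ (ξ k) with hu
  have hrw : ∀ (t : ℝ) (k : Fin K), hadamard θ (allOnes d - t • ξ k) = θ - t • u k := by
    intro t k
    ext i
    simp only [hadamard, allOnes, hu, PiLp.sub_apply, PiLp.smul_apply, smul_eq_mul]
    ring
  set f : ℝ → ℝ := fun t => ∑ k, p k * L (θ - t • u k) with hfdef
  set f' : ℝ → ℝ := fun t => ∑ k, p k * (fderiv ℝ L (θ - t • u k) (-u k)) with hf'def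
  set c : ℝ := ∑ i, v i * θ i ^ 2 *
      B (EuclideanSpace.single i 1) (EuclideanSpace.single i 1) with hcdef
  have hsub0 : ∀ k, θ - (0:ℝ) • u k = θ := by intro k; simp
  have hf0 : f 0 = L θ := by
    simp only [hfdef, hsub0, ← Finset.sum_mul, hp1, one_mul]
  -- eventual differentiability
  have hdiffL : ∀ᶠ x in nhds θ, DifferentiableAt ℝ L x := by
    filter_upwards [hL.eventually (by simp)] with x hx
    exact hx.differentiableAt two_ne_zero
  have hcont : ∀ k, Tendsto (fun t : ℝ => θ - t • u k) (nhds 0) (nhds θ) := by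
    intro k
    have hC : Continuous fun t : ℝ => θ - t • u k :=
      continuous_const.sub (continuous_id.smul continuous_const)
    simpa [hsub0 k] using hC.tendsto 0
  have hev : ∀ᶠ t in nhds (0:ℝ), ∀ k, DifferentiableAt ℝ L (θ - t • u k) := by
    rw [eventually_all]
    exact fun k => (hcont k).eventually hdiffL
  have hγ : ∀ (k : Fin K) (t : ℝ), HasDerivAt (fun s : ℝ => θ - s • u k) (-u k) t := by
    intro k t
    simpa using ((hasDerivAt_id t).smul_const (u k)).const_sub θ
  have hf : ∀ᶠ t in nhds (0:ℝ), HasDerivAt f (f' t) t := by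
    filter_upwards [hev] with t ht
    exact HasDerivAt.fun_sum fun k _ =>
      (((ht k).hasFDerivAt.comp_hasDerivAt t (hγ k t)).const_mul (p k))
  have hf'0 : f' 0 = 0 := by
    simp [hf'def, hsub0, h0]
  -- second derivative
  have hBd : HasFDerivAt (fderiv ℝ L) B θ := by
    have h2 : ContDiffAt ℝ 1 (fderiv ℝ L) θ := hL.fderiv_right (by norm_num)
    exact (h2.differentiableAt one_ne_zero).hasFDerivAt
  have hf'' : HasDerivAt f' (∑ k, p k * (B (u k)) (u k)) 0 := by
    apply HasDerivAt.fun_sum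
    intro k _
    have h1 : HasDerivAt (fun t : ℝ => fderiv ℝ L (θ - t • u k)) (B (-u k)) 0 :=
      HasFDerivAt.comp_hasDerivAt 0 ((hsub0 k).symm ▸ hBd) (hγ k 0)
    have h2 : HasDerivAt (fun t : ℝ => (fderiv ℝ L (θ - t • u k)) (-u k))
        ((B (u k)) (u k)) 0 := by
      have := h1.clm_apply (hasDerivAt_const (0:ℝ) (-u k))
      simpa [hsub0, h0] using this
    exact h2.const_mul (p k)
  -- algebra: identify the second derivative with c
  have hxsum : ∀ x : EuclideanSpace ℝ (Fin d),
      x = ∑ i, x i • EuclideanSpace.single i (1:ℝ) := by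
    intro x
    have h := (EuclideanSpace.basisFun (Fin d) ℝ).sum_repr x
    simpa [EuclideanSpace.basisFun_apply, EuclideanSpace.basisFun_repr] using h.symm
  have hui : ∀ k i, u k i = θ i * ξ k i := by intro k i; rfl
  have hquad : ∀ k, (B (u k)) (u k) = ∑ i, ∑ j, (θ i * ξ k i) *
      ((θ j * ξ k j) * (B (EuclideanSpace.single i 1)) (EuclideanSpace.single j 1)) := by
    have expand : ∀ y z : EuclideanSpace ℝ (Fin d), (B y) z = ∑ i, ∑ j, y i *
        (z j * (B (EuclideanSpace.single i 1)) (EuclideanSpace.single j 1)) := by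
      intro y z
      conv_lhs => rw [hxsum y, hxsum z]
      rw [map_sum]
      have hterm : ∀ x, (B (∑ i, y i • EuclideanSpace.single i (1:ℝ)))
          (z x • EuclideanSpace.single x 1)
          = ∑ i, y i * (z x * (B (EuclideanSpace.single i 1)) (EuclideanSpace.single x 1)) := by
        intro x
        rw [map_smul, smul_eq_mul, map_sum, ContinuousLinearMap.sum_apply, Finset.mul_sum]
        refine Finset.sum_congr rfl fun i _ => ?_
        rw [map_smul, ContinuousLinearMap.smul_apply, smul_eq_mul]
        ring
      simp only [hterm]
      exact Finset.sum_comm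
    intro k
    rw [expand]
    exact Finset.sum_congr rfl fun i _ => Finset.sum_congr rfl fun j _ => by
      rw [hui, hui]
  have hkey : ∑ k, p k * (B (u k)) (u k) = c := by
    rw [hcdef]
    simp only [hquad, Finset.mul_sum]
    rw [Finset.sum_comm]
    refine Finset.sum_congr rfl fun i _ => ?_
    rw [Finset.sum_comm, Finset.sum_eq_single i]
    · rw [hv i, Finset.sum_mul, Finset.sum_mul]
      exact Finset.sum_congr rfl fun k _ => by ring
    · intro j _ hj
      have hz := huncorr i j (Ne.symm hj)
      have : ∑ k, p k * ((θ i * ξ k i) * ((θ j * ξ k j) *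
          (B (EuclideanSpace.single i 1)) (EuclideanSpace.single j 1)))
          = (∑ k, p k * (ξ k i * ξ k j)) * ((θ i * θ j) *
          (B (EuclideanSpace.single i 1)) (EuclideanSpace.single j 1)) := by
        rw [Finset.sum_mul]
        exact Finset.sum_congr rfl fun k _ => by ring
      rw [this, hz, zero_mul]
    · intro hi
      exact absurd (Finset.mem_univ i) hi
  -- conclude
  have hfun : (fun t : ℝ =>
        (∑ k, p k * L (hadamard θ (allOnes d - t • ξ k)))
          - L θ
          - t ^ 2 / 2 * ∑ i, v i * θ i ^ 2 *
              fderiv ℝ (fderiv ℝ L) θ (EuclideanSpace.single i 1)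
                (EuclideanSpace.single i 1))
      = fun t : ℝ => f t - f 0 - t ^ 2 / 2 * c := by
    funext t
    have h1 : ∑ k, p k * L (hadamard θ (allOnes d - t • ξ k)) = f t :=
      Finset.sum_congr rfl fun k _ => by rw [hrw t k]
    rw [h1, hf0, hcdef]
  rw [hfun]
  exact peano_second_order hf hf'0 (hkey ▸ hf'')
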